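/- Multiplication by r raises the m-index: r · Q_n^{k,m}(r) = √((n+m+1)(n+k+m+1)/((2n+k+m+1)(2n+k+m+2))) Q_n^{k,m+1}(r) + √(n(n+k)/((2n+k+m)(2n+k+m+1))) Q_{n-1}^{k,m+1}(r). -/

import Mathlib

/-- The Jacobi polynomial `P_n^{(a,b)}(x)`. -/
noncomputable def jacobiP (n : ℕ) (a b : ℝ) (x : ℝ) : ℝ :=
  (1 / 2 ^ n) * ∑ s ∈ Finset.range (n + 1),
    (Real.Gamma (a + n + 1) / (Real.Gamma (a + n - s + 1) * (Nat.factorial s))) *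
    (Real.Gamma (b + n + 1) / (Real.Gamma (b + s + 1) * (Nat.factorial (n - s)))) *
    (x - 1) ^ (n - s) * (x + 1) ^ s
/-- The Jacobi orthogonality normalization `W_n^{a,b}`. -/
noncomputable def Wnorm (n : ℕ) (a b : ℝ) : ℝ :=
  2 ^ (a + b + 1) / (2 * n + a + b + 1) *
    (Real.Gamma (n + a + 1) * Real.Gamma (n + b + 1) /
      (Real.Gamma (n + a + b + 1) * (Nat.factorial n)))

/-- The normalization `N_n^{k,m} = W_n^{k,m} / 2^{2+k+m}`. -/
noncomputable def Nnorm (n k m : ℕ) : ℝ := Wnorm n k m / 2 ^ (2 + k + m)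

/-- The radial basis element `Q_n^{k,m}(r)`. -/
noncomputable def Q (n k m : ℕ) (r : ℝ) : ℝ :=
  r ^ m * jacobiP n k m (2 * r ^ 2 - 1) / Real.sqrt (Nnorm n k m)

section Aux
open Finset

lemma jacobiP_eq_choose (n a b : ℕ) (x : ℝ) :
    jacobiP n a b x = (1 / 2 ^ n) * ∑ s ∈ Finset.range (n + 1),
      ((a+n).choose s : ℝ) * ((b+n).choose (n - s)) * (x - 1) ^ (n - s) * (x + 1) ^ s := by
  unfold jacobiP
  congr 1
  refine Finset.sum_congr rfl fun s hs => ?_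
  have hsn : s ≤ n := Nat.lt_succ_iff.mp (Finset.mem_range.mp hs)
  congr 2
  have h1 : (a:ℝ) + n + 1 = ((a+n : ℕ):ℝ) + 1 := by push_cast; ring
  have h2 : (a:ℝ) + n - s + 1 = (((a+n) - s : ℕ):ℝ) + 1 := by
    rw [Nat.cast_sub (le_trans hsn (Nat.le_add_left n a))]; push_cast; ring
  have h3 : (b:ℝ) + n + 1 = ((b+n : ℕ):ℝ) + 1 := by push_cast; ring
  have h4 : (b:ℝ) + s + 1 = (((b+n) - (n - s) : ℕ):ℝ) + 1 := by
    have : (b+n) - (n - s) = b + s := by omega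
    rw [this]; push_cast; ring
  rw [h1, h2, h3, h4, Real.Gamma_nat_eq_factorial, Real.Gamma_nat_eq_factorial,
    Real.Gamma_nat_eq_factorial, Real.Gamma_nat_eq_factorial,
    Nat.cast_choose ℝ (le_trans hsn (Nat.le_add_left n a)),
    Nat.cast_choose ℝ (le_trans (Nat.sub_le n s) (Nat.le_add_left n b))]
  ring

lemma sum_key (a b n : ℕ) (u v : ℝ) :
    (2*(n:ℝ)+a+b+3) * ∑ s ∈ range (n+2), ((a+n+1).choose s : ℝ) * ((b+n+1).choose (n+1-s)) * u^(n+1-s) * v^s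
  = ((n:ℝ)+a+b+2) * ∑ s ∈ range (n+2), ((a+n+1).choose s : ℝ) * ((b+n+2).choose (n+1-s)) * u^(n+1-s) * v^s
  + ((n:ℝ)+1+a) * (v - u) * ∑ s ∈ range (n+1), ((a+n).choose s : ℝ) * ((b+n+1).choose (n-s)) * u^(n-s) * v^s := by
  have hBA : ((n:ℝ)+1+a) * (v - u) * ∑ s ∈ range (n+1), ((a+n).choose s : ℝ) * ((b+n+1).choose (n-s)) * u^(n-s) * v^s
      = (∑ s ∈ range (n+1), ((n:ℝ)+1+a) * ((a+n).choose s : ℝ) * ((b+n+1).choose (n-s)) * u^(n-s) * v^(s+1))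
      - (∑ s ∈ range (n+1), ((n:ℝ)+1+a) * ((a+n).choose s : ℝ) * ((b+n+1).choose (n-s)) * u^(n-s+1) * v^s) := by
    rw [← Finset.sum_sub_distrib, Finset.mul_sum]
    refine Finset.sum_congr rfl fun s hs => ?_
    rw [pow_succ, pow_succ]; ring
  rw [hBA]
  have dF : ∑ s ∈ range (n+2), ((a+n+1).choose s : ℝ) * ((b+n+1).choose (n+1-s)) * u^(n+1-s) * v^s
      = (∑ s ∈ range n, ((a+n+1).choose (s+1) : ℝ) * ((b+n+1).choose (n+1-(s+1))) * u^(n+1-(s+1)) * v^(s+1))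
        + ((a+n+1).choose 0 : ℝ) * ((b+n+1).choose (n+1-0)) * u^(n+1-0) * v^0
        + ((a+n+1).choose (n+1) : ℝ) * ((b+n+1).choose (n+1-(n+1))) * u^(n+1-(n+1)) * v^(n+1) := by
    rw [show n+2 = (n+1)+1 from rfl,
      Finset.sum_range_succ' (fun s => ((a+n+1).choose s : ℝ) * ((b+n+1).choose (n+1-s)) * u^(n+1-s) * v^s) (n+1),
      Finset.sum_range_succ (fun s => ((a+n+1).choose (s+1) : ℝ) * ((b+n+1).choose (n+1-(s+1))) * u^(n+1-(s+1)) * v^(s+1)) n]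
    ring
  have dG : ∑ s ∈ range (n+2), ((a+n+1).choose s : ℝ) * ((b+n+2).choose (n+1-s)) * u^(n+1-s) * v^s
      = (∑ s ∈ range n, ((a+n+1).choose (s+1) : ℝ) * ((b+n+2).choose (n+1-(s+1))) * u^(n+1-(s+1)) * v^(s+1))
        + ((a+n+1).choose 0 : ℝ) * ((b+n+2).choose (n+1-0)) * u^(n+1-0) * v^0
        + ((a+n+1).choose (n+1) : ℝ) * ((b+n+2).choose (n+1-(n+1))) * u^(n+1-(n+1)) * v^(n+1) := by
    rw [show n+2 = (n+1)+1 from rfl,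
      Finset.sum_range_succ' (fun s => ((a+n+1).choose s : ℝ) * ((b+n+2).choose (n+1-s)) * u^(n+1-s) * v^s) (n+1),
      Finset.sum_range_succ (fun s => ((a+n+1).choose (s+1) : ℝ) * ((b+n+2).choose (n+1-(s+1))) * u^(n+1-(s+1)) * v^(s+1)) n]
    ring
  have dA : ∑ s ∈ range (n+1), ((n:ℝ)+1+a) * ((a+n).choose s : ℝ) * ((b+n+1).choose (n-s)) * u^(n-s) * v^(s+1)
      = (∑ s ∈ range n, ((n:ℝ)+1+a) * ((a+n).choose s : ℝ) * ((b+n+1).choose (n-s)) * u^(n-s) * v^(s+1))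
        + ((n:ℝ)+1+a) * ((a+n).choose n : ℝ) * ((b+n+1).choose (n-n)) * u^(n-n) * v^(n+1) :=
    Finset.sum_range_succ _ n
  have dB : ∑ s ∈ range (n+1), ((n:ℝ)+1+a) * ((a+n).choose s : ℝ) * ((b+n+1).choose (n-s)) * u^(n-s+1) * v^s
      = (∑ s ∈ range n, ((n:ℝ)+1+a) * ((a+n).choose (s+1) : ℝ) * ((b+n+1).choose (n-(s+1))) * u^(n-(s+1)+1) * v^(s+1))
        + ((n:ℝ)+1+a) * ((a+n).choose 0 : ℝ) * ((b+n+1).choose (n-0)) * u^(n-0+1) * v^0 :=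
    Finset.sum_range_succ' _ n
  have hmid : ∀ s ∈ range n,
      (2*(n:ℝ)+a+b+3) * (((a+n+1).choose (s+1) : ℝ) * ((b+n+1).choose (n+1-(s+1))) * u^(n+1-(s+1)) * v^(s+1))
      + ((n:ℝ)+1+a) * ((a+n).choose (s+1) : ℝ) * ((b+n+1).choose (n-(s+1))) * u^(n-(s+1)+1) * v^(s+1)
      = ((n:ℝ)+a+b+2) * (((a+n+1).choose (s+1) : ℝ) * ((b+n+2).choose (n+1-(s+1))) * u^(n+1-(s+1)) * v^(s+1))
      + ((n:ℝ)+1+a) * ((a+n).choose s : ℝ) * ((b+n+1).choose (n-s)) * u^(n-s) * v^(s+1) := by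
    intro s hs
    have hsn : s < n := Finset.mem_range.mp hs
    obtain ⟨c, hc⟩ : ∃ c, n = s + c + 1 := ⟨n - s - 1, by omega⟩
    have e1 : n + 1 - (s+1) = c + 1 := by omega
    have e2 : n - (s+1) = c := by omega
    have e4 : n - s = c + 1 := by omega
    rw [e1, e2, e4]
    have hn : (n:ℝ) = (s:ℝ) + c + 1 := by rw [hc]; push_cast; ring
    have h1 : ((b+n+2).choose (c+1) : ℝ) = (b+n+1).choose c + (b+n+1).choose (c+1) := by
      exact_mod_cast congrArg (Nat.cast : ℕ → ℝ) (Nat.choose_succ_succ (b+n+1) c)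
    have h2 : (((a+n+1).choose (s+1)) : ℝ) = (a+n).choose s + (a+n).choose (s+1) := by
      exact_mod_cast congrArg (Nat.cast : ℕ → ℝ) (Nat.choose_succ_succ (a+n) s)
    have h3 : ((a:ℝ)+n+1) * ((a+n).choose s : ℝ) = ((a+n+1).choose (s+1) : ℝ) * ((s:ℝ)+1) := by
      have h := congrArg (Nat.cast : ℕ → ℝ) (Nat.add_one_mul_choose_eq (a+n) s)
      push_cast at h
      linarith [h]
    have h4 : ((b+n+1).choose (c+1) : ℝ) * ((c:ℝ)+1) = ((b+n+1).choose c : ℝ) * ((b:ℝ)+s+2) := by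
      have h5 := Nat.choose_succ_right_eq (b+n+1) c
      have h6 : b+n+1-c = b+s+2 := by omega
      rw [h6] at h5
      exact_mod_cast congrArg (Nat.cast : ℕ → ℝ) h5
    linear_combination (u^(c+1) * v^(s+1)) * (
      (-((n:ℝ)+a+b+2) * ((a+n+1).choose (s+1) : ℝ)) * h1
      + (-(((n:ℝ)+1+a)) * ((b+n+1).choose c : ℝ)) * h2
      + (-(((b+n+1).choose c : ℝ) + ((b+n+1).choose (c+1) : ℝ))) * h3
      + ((a+n+1).choose (s+1) : ℝ) * h4)
      + (((a+n+1).choose (s+1) : ℝ) * ((b+n+1).choose (c+1) : ℝ) * u^(c+1) * v^(s+1)) * hn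
  have hmidsum : (2*(n:ℝ)+a+b+3) * (∑ s ∈ range n, ((a+n+1).choose (s+1) : ℝ) * ((b+n+1).choose (n+1-(s+1))) * u^(n+1-(s+1)) * v^(s+1))
      + (∑ s ∈ range n, ((n:ℝ)+1+a) * ((a+n).choose (s+1) : ℝ) * ((b+n+1).choose (n-(s+1))) * u^(n-(s+1)+1) * v^(s+1))
      = ((n:ℝ)+a+b+2) * (∑ s ∈ range n, ((a+n+1).choose (s+1) : ℝ) * ((b+n+2).choose (n+1-(s+1))) * u^(n+1-(s+1)) * v^(s+1))
      + (∑ s ∈ range n, ((n:ℝ)+1+a) * ((a+n).choose s : ℝ) * ((b+n+1).choose (n-s)) * u^(n-s) * v^(s+1)) := by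
    rw [Finset.mul_sum, Finset.mul_sum, ← Finset.sum_add_distrib, ← Finset.sum_add_distrib]
    exact Finset.sum_congr rfl hmid
  have hb0 : (2*(n:ℝ)+a+b+3) * (((a+n+1).choose 0 : ℝ) * ((b+n+1).choose (n+1-0)) * u^(n+1-0) * v^0)
      + ((n:ℝ)+1+a) * ((a+n).choose 0 : ℝ) * ((b+n+1).choose (n-0)) * u^(n-0+1) * v^0
      = ((n:ℝ)+a+b+2) * (((a+n+1).choose 0 : ℝ) * ((b+n+2).choose (n+1-0)) * u^(n+1-0) * v^0) := by
    simp only [Nat.sub_zero, Nat.choose_zero_right, Nat.cast_one, pow_zero]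
    have h1 : ((b+n+2).choose (n+1) : ℝ) = (b+n+1).choose n + (b+n+1).choose (n+1) := by
      exact_mod_cast congrArg (Nat.cast : ℕ → ℝ) (Nat.choose_succ_succ (b+n+1) n)
    have h2 : ((b+n+1).choose (n+1) : ℝ) * ((n:ℝ)+1) = ((b+n+1).choose n : ℝ) * ((b:ℝ)+1) := by
      have h5 := Nat.choose_succ_right_eq (b+n+1) n
      have h6 : b+n+1-n = b+1 := by omega
      rw [h6] at h5
      exact_mod_cast congrArg (Nat.cast : ℕ → ℝ) h5
    linear_combination (u^(n+1)) * ((-((n:ℝ)+a+b+2)) * h1 + h2)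
  have hbN : (2*(n:ℝ)+a+b+3) * (((a+n+1).choose (n+1) : ℝ) * ((b+n+1).choose (n+1-(n+1))) * u^(n+1-(n+1)) * v^(n+1))
      = ((n:ℝ)+a+b+2) * (((a+n+1).choose (n+1) : ℝ) * ((b+n+2).choose (n+1-(n+1))) * u^(n+1-(n+1)) * v^(n+1))
      + ((n:ℝ)+1+a) * ((a+n).choose n : ℝ) * ((b+n+1).choose (n-n)) * u^(n-n) * v^(n+1) := by
    simp only [Nat.sub_self, Nat.choose_zero_right, Nat.cast_one, pow_zero]
    have h : ((a:ℝ)+n+1) * ((a+n).choose n : ℝ) = ((a+n+1).choose (n+1) : ℝ) * ((n:ℝ)+1) := by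
      have hh := congrArg (Nat.cast : ℕ → ℝ) (Nat.add_one_mul_choose_eq (a+n) n)
      push_cast at hh
      linarith [hh]
    linear_combination (-(v^(n+1))) * h
  linear_combination (2*(n:ℝ)+a+b+3) * dF - ((n:ℝ)+a+b+2) * dG - dA + dB + hmidsum + hb0 + hbN

lemma jacobiP_zero (a b : ℕ) (x : ℝ) : jacobiP 0 a b x = 1 := by
  rw [jacobiP_eq_choose]
  simp

lemma jacobiP_rec (a b n : ℕ) (x : ℝ) :
    (2*(n:ℝ)+a+b+3) * jacobiP (n+1) a b x
      = ((n:ℝ)+a+b+2) * jacobiP (n+1) a ((b:ℝ)+1) x + ((n:ℝ)+1+a) * jacobiP n a ((b:ℝ)+1) x := by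
  have hb : ((b:ℝ)+1) = ((b+1 : ℕ):ℝ) := by push_cast; ring
  rw [hb, jacobiP_eq_choose, jacobiP_eq_choose, jacobiP_eq_choose]
  simp only [show a+(n+1) = a+n+1 from rfl, show b+(n+1) = b+n+1 from rfl,
    show (b+1)+(n+1) = b+n+2 by omega, show (b+1)+n = b+n+1 by omega,
    show n+1+1 = n+2 from rfl]
  have key := sum_key a b n (x-1) (x+1)
  have h2 : (x+1) - (x-1) = 2 := by ring
  rw [h2] at key
  linear_combination ((1:ℝ)/2^(n+1)) * key

lemma Nnorm_eq (n k m : ℕ) : Nnorm n k m =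
    ((n+k).factorial * (n+m).factorial : ℝ) /
      (2 * (2*(n:ℝ)+k+m+1) * ((n+k+m).factorial * n.factorial)) := by
  unfold Nnorm Wnorm
  rw [show (k:ℝ)+m+1 = ((k+m+1 : ℕ):ℝ) by push_cast; ring, Real.rpow_natCast,
      show (n:ℝ)+k+1 = ((n+k:ℕ):ℝ)+1 by push_cast; ring, Real.Gamma_nat_eq_factorial,
      show (n:ℝ)+m+1 = ((n+m:ℕ):ℝ)+1 by push_cast; ring, Real.Gamma_nat_eq_factorial,
      show (n:ℝ)+k+m+1 = ((n+k+m:ℕ):ℝ)+1 by push_cast; ring, Real.Gamma_nat_eq_factorial]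
  have h1 : (0:ℝ) < 2*(n:ℝ)+k+m+1 := by positivity
  have h2 : ((n+k+m).factorial : ℝ) ≠ 0 := Nat.cast_ne_zero.mpr (Nat.factorial_ne_zero _)
  have h3 : ((n).factorial : ℝ) ≠ 0 := Nat.cast_ne_zero.mpr (Nat.factorial_ne_zero _)
  have hp : (2:ℝ) ^ (2+k+m) = 2 * 2^(k+m+1) := by
    rw [show 2+k+m = (k+m+1)+1 by omega, pow_succ]; ring
  rw [hp]
  field_simp

lemma Nnorm_pos (n k m : ℕ) : 0 < Nnorm n k m := by
  rw [Nnorm_eq]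
  have h1 : (0:ℝ) < 2*(n:ℝ)+k+m+1 := by positivity
  have h2 : (0:ℝ) < (n+k).factorial := by exact_mod_cast Nat.factorial_pos _
  have h3 : (0:ℝ) < (n+m).factorial := by exact_mod_cast Nat.factorial_pos _
  have h4 : (0:ℝ) < (n+k+m).factorial := by exact_mod_cast Nat.factorial_pos _
  have h5 : (0:ℝ) < n.factorial := by exact_mod_cast Nat.factorial_pos _
  positivity

lemma ratio1 (n k m : ℕ) :
    Nnorm n k (m+1) * ((2*(n:ℝ)+k+m+2)*((n:ℝ)+k+m+1)) = Nnorm n k m * ((2*(n:ℝ)+k+m+1)*((n:ℝ)+m+1)) := by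
  rw [Nnorm_eq, Nnorm_eq]
  simp only [show n+(m+1) = (n+m)+1 from rfl, show n+k+(m+1) = (n+k+m)+1 from rfl,
    Nat.factorial_succ]
  have h1 : (0:ℝ) < 2*(n:ℝ)+k+m+1 := by positivity
  have h2 : ((n+k+m).factorial : ℝ) ≠ 0 := Nat.cast_ne_zero.mpr (Nat.factorial_ne_zero _)
  have h3 : ((n).factorial : ℝ) ≠ 0 := Nat.cast_ne_zero.mpr (Nat.factorial_ne_zero _)
  push_cast
  field_simp
  ring

lemma ratio2 (n k m : ℕ) :
    Nnorm n k (m+1) * ((2*(n:ℝ)+k+m+2)*((n:ℝ)+k+1)) = Nnorm (n+1) k m * ((2*(n:ℝ)+k+m+3)*((n:ℝ)+1)) := by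
  rw [Nnorm_eq, Nnorm_eq]
  simp only [show n+1+k+m = (n+k+m)+1 by omega]
  simp only [show n+1+k = (n+k)+1 by omega]
  simp only [show n+1+m = (n+m)+1 by omega]
  simp only [show n+(m+1) = (n+m)+1 from rfl, show n+k+(m+1) = (n+k+m)+1 from rfl]
  simp only [Nat.factorial_succ]
  have h1 : (0:ℝ) < 2*(n:ℝ)+k+m+1 := by positivity
  have h1' : (0:ℝ) < 2*(n:ℝ)+k+m+3 := by positivity
  have h2 : ((n+k+m).factorial : ℝ) ≠ 0 := Nat.cast_ne_zero.mpr (Nat.factorial_ne_zero _)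
  have h3 : ((n).factorial : ℝ) ≠ 0 := Nat.cast_ne_zero.mpr (Nat.factorial_ne_zero _)
  push_cast
  rw [div_mul_eq_mul_div, div_mul_eq_mul_div, div_eq_div_iff (by positivity) (by positivity)]
  ring

lemma S1 (n k m : ℕ) :
    Real.sqrt (((n : ℝ) + m + 1) * (n + k + m + 1) /
          ((2 * (n : ℝ) + k + m + 1) * (2 * n + k + m + 2)))
      = ((n:ℝ)+k+m+1) * Real.sqrt (Nnorm n k (m+1)) / ((2*(n:ℝ)+k+m+1) * Real.sqrt (Nnorm n k m)) := by
  have hNm := Nnorm_pos n k m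
  have hNm1 := Nnorm_pos n k (m+1)
  have h0 : (0:ℝ) ≤ ((n:ℝ)+k+m+1) * Real.sqrt (Nnorm n k (m+1)) / ((2*(n:ℝ)+k+m+1) * Real.sqrt (Nnorm n k m)) := by
    positivity
  rw [show ((n:ℝ)+k+m+1) * Real.sqrt (Nnorm n k (m+1)) / ((2*(n:ℝ)+k+m+1) * Real.sqrt (Nnorm n k m))
      = Real.sqrt ((((n:ℝ)+k+m+1) * Real.sqrt (Nnorm n k (m+1)) / ((2*(n:ℝ)+k+m+1) * Real.sqrt (Nnorm n k m)))^2)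
    from (Real.sqrt_sq h0).symm]
  congr 1
  rw [div_pow, mul_pow, mul_pow, Real.sq_sqrt hNm1.le, Real.sq_sqrt hNm.le,
      div_eq_div_iff (by positivity) (by positivity)]
  linear_combination (-((n:ℝ)+k+m+1)*(2*(n:ℝ)+k+m+1)) * ratio1 n k m

lemma S2 (n k m : ℕ) (hn : 1 ≤ n) :
    Real.sqrt ((n : ℝ) * (n + k) / ((2 * (n : ℝ) + k + m) * (2 * n + k + m + 1)))
      = ((n:ℝ)+k) * Real.sqrt (Nnorm (n-1) k (m+1)) / ((2*(n:ℝ)+k+m+1) * Real.sqrt (Nnorm n k m)) := by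
  obtain ⟨j, rfl⟩ : ∃ j, n = j+1 := ⟨n-1, by omega⟩
  simp only [Nat.add_sub_cancel]
  have hNm := Nnorm_pos (j+1) k m
  have hNm1 := Nnorm_pos j k (m+1)
  have h0 : (0:ℝ) ≤ ((j+1:ℕ):ℝ) + k := by positivity
  have hd : (0:ℝ) < 2*((j+1:ℕ):ℝ)+k+m+1 := by push_cast; positivity
  have h0' : (0:ℝ) ≤ (((j+1:ℕ):ℝ)+k) * Real.sqrt (Nnorm j k (m+1)) / ((2*((j+1:ℕ):ℝ)+k+m+1) * Real.sqrt (Nnorm (j+1) k m)) := by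
    positivity
  rw [show (((j+1:ℕ):ℝ)+k) * Real.sqrt (Nnorm j k (m+1)) / ((2*((j+1:ℕ):ℝ)+k+m+1) * Real.sqrt (Nnorm (j+1) k m))
      = Real.sqrt (((((j+1:ℕ):ℝ)+k) * Real.sqrt (Nnorm j k (m+1)) / ((2*((j+1:ℕ):ℝ)+k+m+1) * Real.sqrt (Nnorm (j+1) k m)))^2)
    from (Real.sqrt_sq h0').symm]
  congr 1
  have hdd : (0:ℝ) < (2 * ((j+1:ℕ):ℝ) + k + m) * (2 * ((j+1:ℕ):ℝ) + k + m + 1) := by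
    push_cast; positivity
  rw [div_pow, mul_pow, mul_pow, Real.sq_sqrt hNm1.le, Real.sq_sqrt hNm.le,
      div_eq_div_iff hdd.ne' (by positivity)]
  push_cast
  linear_combination (-((j:ℝ)+k+1)*(2*(j:ℝ)+k+m+3)) * ratio2 j k m

end Aux

theorem Q_mul_r (k m n : ℕ) (h : (k, m, n) ≠ (0, 0, 0)) (r : ℝ) :
    r * Q n k m r =
      Real.sqrt (((n : ℝ) + m + 1) * (n + k + m + 1) /
          ((2 * (n : ℝ) + k + m + 1) * (2 * n + k + m + 2))) * Q n k (m + 1) r +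
        Real.sqrt ((n : ℝ) * (n + k) / ((2 * (n : ℝ) + k + m) * (2 * n + k + m + 1))) *
          Q (n - 1) k (m + 1) r := by
  rw [S1]
  have hsm : (0:ℝ) < Real.sqrt (Nnorm n k m) := Real.sqrt_pos.mpr (Nnorm_pos n k m)
  have hsm1 : (0:ℝ) < Real.sqrt (Nnorm n k (m+1)) := Real.sqrt_pos.mpr (Nnorm_pos n k (m+1))
  rcases Nat.eq_zero_or_pos n with hn0 | hn1
  · subst hn0
    have hz : Real.sqrt (((0:ℕ) : ℝ) * ((0:ℕ) + k) / ((2 * ((0:ℕ) : ℝ) + k + m) * (2 * (0:ℕ) + k + m + 1))) = 0 := by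
      norm_num
    rw [hz, zero_mul, add_zero]
    simp only [Q, jacobiP_zero]
    simp only [Nat.cast_zero]
    field_simp
    ring
  · rw [S2 n k m hn1]
    have hsm1' : (0:ℝ) < Real.sqrt (Nnorm (n-1) k (m+1)) := Real.sqrt_pos.mpr (Nnorm_pos (n-1) k (m+1))
    obtain ⟨j, rfl⟩ : ∃ j, n = j+1 := ⟨n-1, by omega⟩
    simp only [Nat.add_sub_cancel] at hsm1' ⊢
    simp only [Q]
    have hrec := jacobiP_rec k m j (2*r^2-1)
    rw [show ((m:ℝ)+1) = ((m+1:ℕ):ℝ) by push_cast; ring] at hrec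
    have hd : (0:ℝ) < 2*((j:ℝ)) + k + m + 3 := by positivity
    rw [show jacobiP (j+1) (↑k) (↑m) (2*r^2-1)
        = (((j:ℝ)+k+m+2) * jacobiP (j+1) (↑k) (↑(m+1)) (2*r^2-1)
           + ((j:ℝ)+1+k) * jacobiP j (↑k) (↑(m+1)) (2*r^2-1)) / (2*(j:ℝ)+k+m+3) from by
      rw [eq_div_iff hd.ne']; linarith [hrec]]
    push_cast
    field_simp
    ring
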